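/- Let A be a real symmetric n×n matrix and X a nonzero positive semidefinite real symmetric n×n matrix of rank r. Then there exist vectors x_1,...,x_r ∈ ℝ^n with X = Σ_{k=1}^r x_k x_k^T and, for every k, r·(x_k^T A x_k) = tr(A X). -/

import Mathlib

open Matrix

variable {n : ℕ}

lemma trace_outer (A : Matrix (Fin n) (Fin n) ℝ) (x : Fin n → ℝ) :
    (A * vecMulVec x x).trace = x ⬝ᵥ A.mulVec x := by
  simp only [trace, diag, mul_apply, vecMulVec_apply, dotProduct, mulVec, Finset.mul_sum]
  congr 1; ext p; congr 1; ext q; ring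

lemma q_expand (A : Matrix (Fin n) (Fin n) ℝ) (a b : Fin n → ℝ) (c s : ℝ) :
    (c • a + s • b) ⬝ᵥ A.mulVec (c • a + s • b)
      = c^2 * (a ⬝ᵥ A.mulVec a) + c*s*(a ⬝ᵥ A.mulVec b) + s*c*(b ⬝ᵥ A.mulVec a)
        + s^2 * (b ⬝ᵥ A.mulVec b) := by
  simp only [mulVec_add, mulVec_smul, dotProduct_add, add_dotProduct, smul_dotProduct,
    dotProduct_smul, smul_eq_mul]
  ring

lemma outer_rot (a b : Fin n → ℝ) (c s : ℝ) (h : c^2 + s^2 = 1) :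
    vecMulVec (c • a + s • b) (c • a + s • b)
      + vecMulVec ((-s) • a + c • b) ((-s) • a + c • b)
      = vecMulVec a a + vecMulVec b b := by
  ext p q
  simp only [Matrix.add_apply, vecMulVec_apply, Pi.add_apply, Pi.smul_apply, smul_eq_mul]
  linear_combination (a p * a q + b p * b q) * h

lemma exists_rot (A : Matrix (Fin n) (Fin n) ℝ) (a b : Fin n → ℝ) (c : ℝ)
    (h1 : a ⬝ᵥ A.mulVec a ≤ c) (h2 : c ≤ b ⬝ᵥ A.mulVec b) :
    ∃ ct st : ℝ, ct^2 + st^2 = 1 ∧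
      (ct • a + st • b) ⬝ᵥ A.mulVec (ct • a + st • b) = c := by
  set qa := a ⬝ᵥ A.mulVec a
  set qb := b ⬝ᵥ A.mulVec b
  set qab := a ⬝ᵥ A.mulVec b
  set qba := b ⬝ᵥ A.mulVec a
  set f : ℝ → ℝ := fun θ =>
    (Real.cos θ)^2 * qa + Real.cos θ * Real.sin θ * qab
      + Real.sin θ * Real.cos θ * qba + (Real.sin θ)^2 * qb with hf
  have hcont : Continuous f := by fun_prop
  have h0 : f 0 = qa := by simp [hf]
  have hpi : f (Real.pi/2) = qb := by simp [hf]
  have := intermediate_value_Icc (by positivity : (0:ℝ) ≤ Real.pi/2) hcont.continuousOn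
  rw [h0, hpi] at this
  obtain ⟨θ, -, hθ⟩ := this ⟨h1, h2⟩
  exact ⟨Real.cos θ, Real.sin θ, Real.cos_sq_add_sin_sq θ, by rw [q_expand]; exact hθ⟩

lemma main_ind (A : Matrix (Fin n) (Fin n) ℝ) (c : ℝ) :
    ∀ (m : ℕ) (s : Multiset (Fin n → ℝ)), Multiset.card s = m →
      (s.map (fun v => v ⬝ᵥ A.mulVec v)).sum = m * c →
      ∃ t : Multiset (Fin n → ℝ), Multiset.card t = m ∧
        (t.map (fun v => vecMulVec v v)).sum = (s.map (fun v => vecMulVec v v)).sum ∧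
        ∀ v ∈ t, v ⬝ᵥ A.mulVec v = c := by
  intro m
  induction m with
  | zero =>
    intro s hs _
    rw [Multiset.card_eq_zero] at hs
    exact ⟨0, rfl, by simp [hs], by simp⟩
  | succ m ih =>
    intro s hs hsum
    set q : (Fin n → ℝ) → ℝ := fun v => v ⬝ᵥ A.mulVec v with hq
    by_cases hall : ∀ v ∈ s, q v = c
    · exact ⟨s, hs, rfl, hall⟩
    push_neg at hall
    obtain ⟨w, hw, hwc⟩ := hall
    have hconstsum : (s.map (fun _ : (Fin n → ℝ) => c)).sum = (m+1 : ℕ) * c := by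
      rw [Multiset.map_const', Multiset.sum_replicate, hs, nsmul_eq_mul]
    have hlt : ∃ a ∈ s, q a < c := by
      by_contra h; push_neg at h
      have : (s.map (fun _ : (Fin n → ℝ) => c)).sum < (s.map q).sum :=
        Multiset.sum_lt_sum h ⟨w, hw, lt_of_le_of_ne (h w hw) (Ne.symm hwc)⟩
      rw [hconstsum, hsum] at this
      simp at this
    have hgt : ∃ b ∈ s, c < q b := by
      by_contra h; push_neg at h
      have : (s.map q).sum < (s.map (fun _ : (Fin n → ℝ) => c)).sum :=
        Multiset.sum_lt_sum h ⟨w, hw, lt_of_le_of_ne (h w hw) hwc⟩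
      rw [hconstsum, hsum] at this
      simp at this
    obtain ⟨a, ha, haq⟩ := hlt
    obtain ⟨b, hb, hbq⟩ := hgt
    have hab : a ≠ b := fun h => absurd (h ▸ haq) (not_lt.mpr (le_of_lt hbq))
    obtain ⟨t0, ht0⟩ := Multiset.exists_cons_of_mem ha
    have hb' : b ∈ t0 := by
      have := hb
      rw [ht0, Multiset.mem_cons] at this
      exact this.resolve_left (Ne.symm hab)
    obtain ⟨u, hu⟩ := Multiset.exists_cons_of_mem hb'
    have hsu : s = a ::ₘ b ::ₘ u := by rw [ht0, hu]
    obtain ⟨ct, st, hone, hrot⟩ := exists_rot A a b c (le_of_lt haq) (le_of_lt hbq)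
    set p := ct • a + st • b with hp
    set w' := (-st) • a + ct • b with hw'
    have houter : vecMulVec p p + vecMulVec w' w' = vecMulVec a a + vecMulVec b b :=
      outer_rot a b ct st hone
    have hqsum : q p + q w' = q a + q b := by
      have h1 : (A * (vecMulVec p p + vecMulVec w' w')).trace
          = (A * (vecMulVec a a + vecMulVec b b)).trace := by rw [houter]
      simpa only [mul_add, trace_add, trace_outer, hq] using h1
    -- apply ih to w' ::ₘ u
    have hcard_u : Multiset.card u = m - 1 := by
      have := hs; rw [hsu] at this; simp at this; omega
    have hm1 : Multiset.card (w' ::ₘ u) = m := by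
      rw [Multiset.card_cons, hcard_u]
      have := hs; rw [hsu] at this; simp at this; omega
    have hsum_u : ((w' ::ₘ u).map q).sum = m * c := by
      have hs' : (s.map q).sum = q a + q b + (u.map q).sum := by
        rw [hsu]; simp [add_assoc]
      have : q a + q b + (u.map q).sum = (m+1 : ℕ) * c := by rw [← hs', hsum]
      have hqp : q p = c := hrot
      rw [Multiset.map_cons, Multiset.sum_cons]
      have hqw' : q w' = q a + q b - c := by
        have := hqsum; rw [hqp] at this; linarith
      push_cast at this ⊢
      linarith
    obtain ⟨t', ht'card, ht'sum, ht'all⟩ := ih (w' ::ₘ u) hm1 hsum_u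
    refine ⟨p ::ₘ t', by simp [ht'card], ?_, ?_⟩
    · rw [Multiset.map_cons, Multiset.sum_cons, ht'sum, hsu]
      simp only [Multiset.map_cons, Multiset.sum_cons]
      have : vecMulVec p p + (vecMulVec w' w' + (u.map (fun v => vecMulVec v v)).sum)
          = (vecMulVec p p + vecMulVec w' w') + (u.map (fun v => vecMulVec v v)).sum := by
        rw [add_assoc]
      rw [this, houter, add_assoc]
    · intro v hv
      rw [Multiset.mem_cons] at hv
      rcases hv with h | h
      · rw [h]; exact hrot
      · exact ht'all v h

lemma decomp_aux {n : ℕ} (U : Matrix (Fin n) (Fin n) ℝ) (μ : Fin n → ℝ) (hμ : ∀ i, 0 ≤ μ i) :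
    U * diagonal μ * star U
      = ∑ i, vecMulVec (Real.sqrt (μ i) • fun p => U p i) (Real.sqrt (μ i) • fun p => U p i) := by
  ext p q
  simp only [Matrix.sum_apply, vecMulVec_apply, Pi.smul_apply, smul_eq_mul, mul_apply,
    diagonal_apply, star_apply, star_trivial, mul_ite, mul_zero, ite_mul, zero_mul,
    Finset.sum_ite_eq', Finset.mem_univ, if_true]
  refine Finset.sum_congr rfl fun i _ => ?_
  have hs : Real.sqrt (μ i) * Real.sqrt (μ i) = μ i := Real.mul_self_sqrt (hμ i)
  linear_combination (-(U p i * U q i)) * hs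

lemma initial_decomp {n : ℕ} (X : Matrix (Fin n) (Fin n) ℝ) (hX : X.PosSemidef) :
    ∃ y : Fin n → (Fin n → ℝ),
      X = ∑ i, vecMulVec (y i) (y i) ∧
      ∀ i, hX.1.eigenvalues i = 0 → y i = 0 := by
  refine ⟨fun i => Real.sqrt (hX.1.eigenvalues i) •
      (fun p => (hX.1.eigenvectorUnitary : Matrix (Fin n) (Fin n) ℝ) p i), ?_, ?_⟩
  · have hspec := hX.1.spectral_theorem
    have : RCLike.ofReal ∘ hX.1.eigenvalues = hX.1.eigenvalues := by
      ext i; simp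
    rw [this] at hspec
    exact hspec.trans (decomp_aux _ _ (fun i => hX.eigenvalues_nonneg i))
  · intro i hi
    simp [hi]

theorem stmt_0 (n r : ℕ) (A X : Matrix (Fin n) (Fin n) ℝ)
    (hA : A.IsSymm) (hX : X.PosSemidef) (hX0 : X ≠ 0) (hr : X.rank = r) :
    ∃ x : Fin r → (Fin n → ℝ),
      X = ∑ k, vecMulVec (x k) (x k) ∧
      ∀ k, (r : ℝ) * (x k ⬝ᵥ A.mulVec (x k)) = (A * X).trace := by
  classical
  obtain ⟨y, hXy, hy0⟩ := initial_decomp X hX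
  set μ := hX.1.eigenvalues with hμ
  set s : Finset (Fin n) := Finset.univ.filter (fun i => μ i ≠ 0) with hsdef
  have hscard : s.card = r := by
    rw [hsdef, ← Fintype.card_subtype, ← hX.1.rank_eq_card_non_zero_eigs, hr]
  have hXs : X = ∑ i ∈ s, vecMulVec (y i) (y i) := by
    rw [hXy]
    exact (Finset.sum_filter_of_ne (fun i _ h => by
      intro hi
      exact h (by rw [hy0 i hi]; ext p q; simp [vecMulVec_apply]))).symm
  have hr0 : (r : ℝ) ≠ 0 := by
    intro h
    apply hX0
    have : r = 0 := by exact_mod_cast h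
    rw [this, Finset.card_eq_zero] at hscard
    rw [hXs, hscard, Finset.sum_empty]
  set c : ℝ := (A * X).trace / r with hc
  have htr : (A * X).trace = ∑ i ∈ s, (y i ⬝ᵥ A.mulVec (y i)) := by
    rw [hXs, Finset.mul_sum, trace_sum]
    exact Finset.sum_congr rfl fun i _ => trace_outer A (y i)
  set s0 : Multiset (Fin n → ℝ) := s.val.map y with hs0
  have hs0card : Multiset.card s0 = r := by
    rw [hs0, Multiset.card_map]; exact hscard
  have hs0sum : (s0.map (fun v => v ⬝ᵥ A.mulVec v)).sum = r * c := by
    rw [hs0, Multiset.map_map, hc, mul_div_cancel₀ _ hr0]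
    rw [htr, Finset.sum_eq_multiset_sum]
    rfl
  have hs0outer : (s0.map (fun v => vecMulVec v v)).sum = X := by
    rw [hs0, Multiset.map_map, hXs, Finset.sum_eq_multiset_sum]
    rfl
  obtain ⟨t, htcard, htsum, htall⟩ := main_ind A c r s0 hs0card hs0sum
  have hLlen : t.toList.length = r := by rw [Multiset.length_toList, htcard]
  refine ⟨fun k => t.toList.get (Fin.cast hLlen.symm k), ?_, ?_⟩
  · have h1 : (t.toList.map (fun v => vecMulVec v v)).sum = X := by
      rw [← hs0outer, ← htsum]
      conv_rhs => rw [← Multiset.coe_toList t]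
      rw [Multiset.map_coe, Multiset.sum_coe]
    have h3 : (t.toList.map (fun v => vecMulVec v v)).sum
        = ∑ i : Fin t.toList.length, vecMulVec (t.toList.get i) (t.toList.get i) := by
      conv_lhs => rw [← List.ofFn_get t.toList]
      rw [List.map_ofFn, List.sum_ofFn]
      rfl
    calc X = (t.toList.map (fun v => vecMulVec v v)).sum := h1.symm
      _ = ∑ i : Fin t.toList.length, vecMulVec (t.toList.get i) (t.toList.get i) := h3
      _ = ∑ k : Fin r, vecMulVec (t.toList.get (Fin.cast hLlen.symm k))
            (t.toList.get (Fin.cast hLlen.symm k)) :=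
        (Fin.sum_congr' _ hLlen.symm).symm
  · intro k
    have hmem : t.toList.get (Fin.cast hLlen.symm k) ∈ t :=
      Multiset.mem_toList.mp (List.get_mem _ _)
    rw [htall _ hmem, hc, mul_div_cancel₀ _ hr0]
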